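/- Let C ⊆ ℝ^p be a rational polytope defined by half-spaces {x ∈ ℝ^p : Σ_j α_{ij} x_j ≥ β_i} for i = 1,…,ℓ, where α_{ij} and β_i are integers. Let M be a positive integer with α_{ij} ≥ −M and |β_i| < M for all i,j, and let 0 < ε < 1 be a real number. Then there exists a positive integer m depending only on M, p and ε (not on C) such that for every extreme point v of C contained in [ε,1]^p, the point m·v is integral. -/

import Mathlib

open Finset in
private lemma span_tight_rows {p ℓ : ℕ} (A : Fin ℓ → Fin p → ℝ) (b : Fin ℓ → ℝ)
    (C : Set (Fin p → ℝ)) (hC : C = {x | ∀ i, b i ≤ ∑ j, A i j * x j})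
    (v : Fin p → ℝ) (hv : v ∈ C)
    (hext : ∀ u ∈ C, ∀ w ∈ C, ∀ t : ℝ, 0 < t → t < 1 →
      t • u + (1 - t) • w = v → u = v ∧ w = v) :
    Submodule.span ℝ ((fun i => (WithLp.equiv 2 (Fin p → ℝ)).symm (A i)) ''
      {i | ∑ j, A i j * v j = b i}) = ⊤ := by
  classical
  rw [← Submodule.orthogonal_eq_bot_iff, Submodule.eq_bot_iff]
  intro x hx
  by_contra hx0
  set T : Set (Fin ℓ) := {i | ∑ j, A i j * v j = b i} with hT
  set x' : Fin p → ℝ := (WithLp.equiv 2 (Fin p → ℝ)) x with hx'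
  have hvC : ∀ i, b i ≤ ∑ j, A i j * v j := by rw [hC] at hv; exact hv
  set d : Fin ℓ → ℝ := fun i => ∑ j, A i j * x' j with hd
  have hdotT : ∀ i ∈ T, d i = 0 := by
    intro i hi
    have h0 := (Submodule.mem_orthogonal _ x).1 hx _
      (Submodule.subset_span ⟨i, hi, rfl⟩)
    have : (inner ℝ ((WithLp.equiv 2 (Fin p → ℝ)).symm (A i)) x : ℝ) = ∑ j, A i j * x' j := by
      simp [PiLp.inner_apply, RCLike.inner_apply, hx', mul_comm]
    rw [h0] at this
    exact this.symm
  set g : Fin ℓ → ℝ :=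
    fun i => if i ∈ T then 1 else ((∑ j, A i j * v j) - b i) / (|d i| + 1) with hg
  have hgpos : ∀ i, 0 < g i := by
    intro i
    by_cases hi : i ∈ T
    · simp [hg, hi]
    · have hslack : 0 < (∑ j, A i j * v j) - b i := by
        have hne : ∑ j, A i j * v j ≠ b i := hi
        have := hvC i
        cases' lt_or_eq_of_le this with h h
        · linarith
        · exact absurd h.symm hne
      have : (0:ℝ) < |d i| + 1 := by positivity
      simp only [hg, hi, if_false]
      exact div_pos hslack this
  set F : Finset ℝ := insert 1 (Finset.univ.image g) with hF
  have hFne : F.Nonempty := ⟨1, Finset.mem_insert_self _ _⟩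
  set δ : ℝ := F.min' hFne with hδ
  have hδpos : 0 < δ := by
    have hmem : δ ∈ F := F.min'_mem hFne
    rcases Finset.mem_insert.1 hmem with h | h
    · rw [h]; norm_num
    · obtain ⟨i, -, hi⟩ := Finset.mem_image.1 h
      rw [← hi]; exact hgpos i
  have hδle : ∀ i, δ ≤ g i := fun i =>
    F.min'_le _ (Finset.mem_insert_of_mem (Finset.mem_image_of_mem g (Finset.mem_univ i)))
  have hmem : ∀ c : ℝ, |c| ≤ δ → v + c • x' ∈ C := by
    intro c hc
    rw [hC]
    intro i
    have expand : ∑ j, A i j * (v + c • x') j = (∑ j, A i j * v j) + c * d i := by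
      have h1 : ∀ j ∈ Finset.univ, A i j * (v + c • x') j
          = A i j * v j + c * (A i j * x' j) := by
        intro j _
        simp only [Pi.add_apply, Pi.smul_apply, smul_eq_mul]
        ring
      rw [Finset.sum_congr rfl h1, Finset.sum_add_distrib, ← Finset.mul_sum]
    show b i ≤ ∑ j, A i j * (v + c • x') j
    rw [expand]
    by_cases hi : i ∈ T
    · rw [hdotT i hi]
      have := hvC i
      linarith
    · have hslack : δ * (|d i| + 1) ≤ (∑ j, A i j * v j) - b i := by
        have h1 := hδle i
        rw [hg] at h1
        simp only [hi, if_false] at h1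
        have hpos : (0:ℝ) < |d i| + 1 := by positivity
        exact (le_div_iff₀ hpos).1 h1
      have h2 : |c * d i| ≤ (∑ j, A i j * v j) - b i := by
        calc |c * d i| = |c| * |d i| := abs_mul _ _
          _ ≤ δ * |d i| := by
              apply mul_le_mul_of_nonneg_right hc (abs_nonneg _)
          _ ≤ δ * (|d i| + 1) := by nlinarith [hδpos]
          _ ≤ _ := hslack
      have := neg_abs_le (c * d i)
      linarith
  have hu := hmem δ (by rw [abs_of_pos hδpos])
  have hw := hmem (-δ) (by rw [abs_neg, abs_of_pos hδpos])
  have hhalf : (1/2 : ℝ) • (v + δ • x') + ((1:ℝ) - 1/2) • (v + (-δ) • x') = v := by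
    funext j
    simp only [Pi.add_apply, Pi.smul_apply, smul_eq_mul]
    ring
  obtain ⟨h1, -⟩ := hext _ hu _ hw (1/2) (by norm_num) (by norm_num) hhalf
  have h2 : δ • x' = 0 := by
    have := add_eq_left.1 h1
    exact this
  have h3 : x' = 0 := (smul_eq_zero.mp h2).resolve_left (ne_of_gt hδpos)
  apply hx0
  have : (WithLp.equiv 2 (Fin p → ℝ)) x = (WithLp.equiv 2 (Fin p → ℝ)) 0 := by
    rw [← hx', h3]; simp
  exact (WithLp.equiv 2 (Fin p → ℝ)).injective this

/-- Extreme points of a rational polytope cut out by integral inequalities with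
entries bounded below by `-M` and right-hand sides bounded by `M` in absolute value,
which lie in `[ε,1]^p`, have denominators bounded by a constant `m = m(M,p,ε)`. -/
theorem stmt_0 (p M : ℕ) (hM : 0 < M) (ε : ℝ) (hε0 : 0 < ε) (hε1 : ε < 1) :
    ∃ m : ℕ, 0 < m ∧
      ∀ (ℓ : ℕ) (α : Fin ℓ → Fin p → ℤ) (β : Fin ℓ → ℤ),
        (∀ i j, -(M : ℤ) ≤ α i j) →
        (∀ i, |β i| < (M : ℤ)) →
        ∀ C : Set (Fin p → ℝ),
          C = {x | ∀ i, (β i : ℝ) ≤ ∑ j, (α i j : ℝ) * x j} →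
          IsCompact C →
          ∀ v ∈ C,
            (∀ u ∈ C, ∀ w ∈ C, ∀ t : ℝ, 0 < t → t < 1 →
              t • u + (1 - t) • w = v → u = v ∧ w = v) →
            (∀ j, v j ∈ Set.Icc ε 1) →
            ∀ j, ∃ z : ℤ, (m : ℝ) * v j = z := by
  classical
  set B : ℕ := M + ⌈((p+1) * M : ℝ) / ε⌉₊ with hBdef
  set N : ℕ := p.factorial * B ^ p with hNdef
  refine ⟨N.factorial, N.factorial_pos, ?_⟩
  intro ℓ α β hα hβ C hC hCcpt v hvC hext hvbox
  -- the tight set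
  set T : Set (Fin ℓ) := {i | ∑ j, ((α i j : ℝ)) * v j = (β i : ℝ)} with hT
  have hvC' : ∀ i, (β i : ℝ) ≤ ∑ j, (α i j : ℝ) * v j := by rw [hC] at hvC; exact hvC
  -- Step A: entries of tight rows are bounded by B
  have hBM : (M : ℝ) ≤ B := by
    rw [hBdef]; push_cast; linarith [Nat.cast_nonneg (α := ℝ) ⌈((p+1) * M : ℝ) / ε⌉₊]
  have hBdiv : ((p+1) * M : ℝ) / ε ≤ B := by
    rw [hBdef]; push_cast
    have := Nat.le_ceil (((p+1) * M : ℝ) / ε)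
    have hM0 : (0:ℝ) ≤ M := by positivity
    push_cast at this
    linarith
  have hbound : ∀ i ∈ T, ∀ j, |α i j| ≤ (B : ℤ) := by
    intro i hi j0
    have htight : ∑ j, (α i j : ℝ) * v j = (β i : ℝ) := hi
    have hβR : |(β i : ℝ)| < (M : ℝ) := by
      have := hβ i
      exact_mod_cast this
    have hαR : ∀ j, -(M:ℝ) ≤ (α i j : ℝ) := by
      intro j; exact_mod_cast hα i j
    have hvpos : ∀ j, 0 < v j := fun j => lt_of_lt_of_le hε0 (hvbox j).1
    have hvle : ∀ j, v j ≤ 1 := fun j => (hvbox j).2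
    -- each term -(α i j) * v j ≤ M
    have hterm : ∀ j, -((α i j : ℝ) * v j) ≤ M := by
      intro j
      have h1 : -(α i j : ℝ) ≤ M := by linarith [hαR j]
      have h2 : -((α i j : ℝ) * v j) = (-(α i j : ℝ)) * v j := by ring
      rw [h2]
      calc (-(α i j : ℝ)) * v j ≤ (M:ℝ) * v j := by
            rcases le_or_gt (-(α i j : ℝ)) 0 with h | h
            · nlinarith [hvpos j]
            · exact mul_le_mul_of_nonneg_right h1 (le_of_lt (hvpos j))
        _ ≤ (M:ℝ) * 1 := by
            have : (0:ℝ) ≤ M := by positivity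
            nlinarith [hvle j]
        _ = M := mul_one _
    -- upper bound on the j0 term
    have hup : (α i j0 : ℝ) * v j0 ≤ (p+1) * M := by
      have hadd := Finset.add_sum_erase Finset.univ (fun j => (α i j : ℝ) * v j)
        (Finset.mem_univ j0)
      have hkey : (α i j0 : ℝ) * v j0 + ∑ j ∈ Finset.univ.erase j0, (α i j : ℝ) * v j
          = (β i : ℝ) := by
        rw [hadd]; exact htight
      have hsum : ∑ j ∈ Finset.univ.erase j0, (-(M:ℝ))
          ≤ ∑ j ∈ Finset.univ.erase j0, (α i j : ℝ) * v j :=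
        Finset.sum_le_sum (fun j _ => by linarith [hterm j])
      have hconst : ∑ _j ∈ Finset.univ.erase j0, (-(M:ℝ))
          = -(((Finset.univ.erase j0).card : ℝ) * M) := by
        rw [Finset.sum_const, nsmul_eq_mul]; ring
      rw [hconst] at hsum
      have hcard : ((Finset.univ.erase j0).card : ℝ) ≤ p := by
        have h1 := Finset.card_erase_le (a := j0) (s := (Finset.univ : Finset (Fin p)))
        have h2 : (Finset.univ : Finset (Fin p)).card = p := by simp
        have h3 : (Finset.univ.erase j0).card ≤ p := by omega
        exact_mod_cast h3
      have hM0 : (0:ℝ) ≤ M := by positivity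
      have habs : |(β i : ℝ)| < M := hβR
      have hb : (β i : ℝ) ≤ M := le_of_lt (lt_of_le_of_lt (le_abs_self _) habs)
      nlinarith
    rcases le_or_gt 0 (α i j0) with h | h
    · have hεle : (α i j0 : ℝ) * ε ≤ (α i j0 : ℝ) * v j0 := by
        have : (0:ℝ) ≤ (α i j0 : ℝ) := by exact_mod_cast h
        nlinarith [(hvbox j0).1]
      have : (α i j0 : ℝ) ≤ ((p+1) * M : ℝ) / ε := by
        rw [le_div_iff₀ hε0]
        calc (α i j0 : ℝ) * ε ≤ (α i j0 : ℝ) * v j0 := hεle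
          _ ≤ (p+1) * M := hup
      have hle : (α i j0 : ℝ) ≤ B := le_trans this hBdiv
      have : (α i j0 : ℤ) ≤ B := by exact_mod_cast hle
      rw [abs_of_nonneg h]
      exact this
    · have h1 : |α i j0| = -(α i j0) := abs_of_neg h
      rw [h1]
      have h2 : -(α i j0) ≤ (M:ℤ) := by linarith [hα i j0]
      have h3 : (M:ℤ) ≤ B := by exact_mod_cast hBM
      omega
  -- Step B: the tight rows span
  have hspan := span_tight_rows (fun i j => (α i j : ℝ)) (fun i => (β i : ℝ)) C hC v hvC hext
  -- Step C: extract a basis of rows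
  obtain ⟨s, hs_sub, hs_span, hs_li⟩ :=
    exists_linearIndependent ℝ ((fun i => (WithLp.equiv 2 (Fin p → ℝ)).symm
      (fun j => (α i j : ℝ))) '' T)
  rw [hspan] at hs_span
  have hs_fin : s.Finite := hs_li.setFinite
  have : Fintype s := hs_fin.fintype
  have hbasis : Submodule.span ℝ (Set.range ((↑) : s → EuclideanSpace ℝ (Fin p))) = ⊤ := by
    rw [Subtype.range_coe]; exact hs_span
  let bas : Module.Basis s ℝ (EuclideanSpace ℝ (Fin p)) := Module.Basis.mk hs_li (by rw [hbasis])
  have hcard : Fintype.card s = p := by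
    have h1 := Module.finrank_eq_card_basis bas
    rw [finrank_euclideanSpace_fin] at h1
    omega
  let e : Fin p ≃ s := (Fintype.equivFinOfCardEq hcard).symm
  have hpickex : ∀ k : Fin p, ∃ i : Fin ℓ, i ∈ T ∧
      (WithLp.equiv 2 (Fin p → ℝ)).symm (fun j => (α i j : ℝ)) = (e k : EuclideanSpace ℝ (Fin p)) := by
    intro k
    have := hs_sub (e k).2
    obtain ⟨i, hi, hrow⟩ := this
    exact ⟨i, hi, hrow⟩
  choose pick hpickT hpickrow using hpickex
  set A : Matrix (Fin p) (Fin p) ℤ := Matrix.of (fun k j => α (pick k) j) with hA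
  set A' : Matrix (Fin p) (Fin p) ℝ := A.map (Int.castRingHom ℝ) with hA'
  -- rows of A' are linearly independent
  have hrowsli : LinearIndependent ℝ (fun k => A' k) := by
    have h1 : LinearIndependent ℝ (fun k : Fin p => ((e k : EuclideanSpace ℝ (Fin p)))) :=
      hs_li.comp e e.injective
    have h2 := h1.map' (WithLp.linearEquiv 2 ℝ (Fin p → ℝ)).toLinearMap
      (WithLp.linearEquiv 2 ℝ (Fin p → ℝ)).ker
    have h3 : ((WithLp.linearEquiv 2 ℝ (Fin p → ℝ)).toLinearMap ∘
        fun k : Fin p => ((e k : EuclideanSpace ℝ (Fin p)))) = fun k => A' k := by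
      funext k
      simp only [Function.comp_apply, LinearEquiv.coe_coe, WithLp.linearEquiv_apply]
      rw [← hpickrow k]
      funext j
      simp [hA', hA]
    rwa [h3] at h2
  have hunit : IsUnit A' := Matrix.linearIndependent_rows_iff_isUnit.1 hrowsli
  have hdet' : A'.det ≠ 0 := by
    have := hunit.map (Matrix.detMonoidHom)
    simpa [isUnit_iff_ne_zero] using this
  have hdetcast : ((A.det : ℤ) : ℝ) = A'.det := by
    rw [hA']
    exact RingHom.map_det (Int.castRingHom ℝ) A
  have hdet : A.det ≠ 0 := by
    intro h
    rw [h] at hdetcast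
    simp at hdetcast
    exact hdet' hdetcast.symm
  -- A'.mulVec v = β ∘ pick
  have hmul : A'.mulVec v = fun k => (β (pick k) : ℝ) := by
    funext k
    have htight : ∑ j, (α (pick k) j : ℝ) * v j = (β (pick k) : ℝ) := hpickT k
    simp only [Matrix.mulVec, dotProduct, hA', hA, Matrix.map_apply, Matrix.of_apply]
    exact htight
  -- Cramer: det • v = adjugate A' *ᵥ (β ∘ pick)
  have hcramer : A'.det • v = A'.adjugate.mulVec (fun k => (β (pick k) : ℝ)) := by
    rw [← hmul, Matrix.mulVec_mulVec, Matrix.adjugate_mul, Matrix.smul_mulVec,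
      Matrix.one_mulVec]
  -- integrality: det * v j is an integer
  set z : Fin p → ℤ := fun j => ∑ k, A.adjugate j k * β (pick k) with hz
  have hint : ∀ j, ((A.det : ℤ) : ℝ) * v j = ((z j : ℤ) : ℝ) := by
    intro j
    have h1 := congrFun hcramer j
    simp only [Pi.smul_apply, smul_eq_mul] at h1
    rw [hdetcast, h1]
    have hadj : A'.adjugate = (A.adjugate).map (Int.castRingHom ℝ) := by
      rw [hA']
      exact (RingHom.map_adjugate (Int.castRingHom ℝ) A).symm
    simp only [Matrix.mulVec, dotProduct, hadj, Matrix.map_apply, hz]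
    push_cast
    rfl
  -- bound |det A| ≤ N
  have habsdet : |A.det| ≤ (N : ℤ) := by
    have hx : ∀ k j, |A k j| ≤ (B : ℤ) := by
      intro k j
      exact hbound (pick k) (hpickT k) j
    have := Matrix.det_le (abv := AbsoluteValue.abs) (A := A) (x := (B:ℤ)) (fun k j => hx k j)
    simp only [Fintype.card_fin, nsmul_eq_mul] at this
    rw [hNdef]
    push_cast
    exact_mod_cast this
  have hdvd : A.det ∣ (N.factorial : ℤ) := by
    have h1 : A.det.natAbs ∣ N.factorial := by
      apply Nat.dvd_factorial
      · exact Int.natAbs_pos.2 hdet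
      · have : (A.det.natAbs : ℤ) ≤ N := by rwa [Int.abs_eq_natAbs] at habsdet
        exact_mod_cast this
    have := Int.natCast_dvd_natCast.2 h1
    rwa [Int.natAbs_dvd] at this
  obtain ⟨c, hcfac⟩ := hdvd
  intro j
  refine ⟨c * z j, ?_⟩
  have : ((N.factorial : ℤ) : ℝ) * v j = ((c * z j : ℤ) : ℝ) := by
    rw [hcfac]
    push_cast [-Int.cast_det]
    have h := hint j
    push_cast [-Int.cast_det] at h
    calc ((A.det : ℝ)) * (c:ℝ) * v j = (c:ℝ) * (((A.det : ℝ)) * v j) := by ring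
      _ = (c:ℝ) * ((z j : ℝ)) := by rw [h]
  exact_mod_cast this
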